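/- Let k ≥ 1 and let μ be a compactly supported Borel probability measure on ℝ^k. Then the Fisher Information τ ↦ I^{(k)}(μ_τ) = ∫ p_τ(x) ‖∇ log p_τ(x)‖² dx is a nonincreasing function of the noise variance τ on (0, ∞). -/

import Mathlib

open MeasureTheory

noncomputable section

abbrev Euc (k : ℕ) : Type := EuclideanSpace ℝ (Fin k)

/-- The centered Gaussian density on `ℝ^k` with covariance `τ • I`. -/
def gaussDensity (k : ℕ) (τ : ℝ) (z : Euc k) : ℝ :=
  (2 * Real.pi * τ) ^ (-(k : ℝ) / 2) * Real.exp (-‖z‖ ^ 2 / (2 * τ))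

/-- The heat-smoothed density `p_τ(x) = ∫ φ_τ(x - y) dμ(y)`. -/
def heatDensity {k : ℕ} (μ : Measure (Euc k)) (τ : ℝ) (x : Euc k) : ℝ :=
  ∫ y, gaussDensity k τ (x - y) ∂μ

/-- Partial derivative of `f` in the `i`-th coordinate direction. -/
def pderiv' {k : ℕ} (f : Euc k → ℝ) (i : Fin k) (x : Euc k) : ℝ :=
  fderiv ℝ f x (EuclideanSpace.single i 1)

/-- Entry `(i, j)` of the Hessian matrix of `f` at `x`. -/
def hessEntry {k : ℕ} (f : Euc k → ℝ) (i j : Fin k) (x : Euc k) : ℝ :=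
  pderiv' (pderiv' f j) i x

/-- The Laplacian of `f` at `x`. -/
def laplacian' {k : ℕ} (f : Euc k → ℝ) (x : Euc k) : ℝ :=
  ∑ i, hessEntry f i i x

/-- The squared Frobenius norm of the Hessian of `f` at `x`. -/
def hessFrobSq {k : ℕ} (f : Euc k → ℝ) (x : Euc k) : ℝ :=
  ∑ i, ∑ j, hessEntry f i j x ^ 2

/-- The log heat-smoothed density. -/
def logHeat {k : ℕ} (μ : Measure (Euc k)) (τ : ℝ) (x : Euc k) : ℝ :=
  Real.log (heatDensity μ τ x)

/-- The Fisher Information `I^{(k)}(μ_τ) = ∫ p_τ ‖∇ log p_τ‖²`. -/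
def FisherInfo {k : ℕ} (μ : Measure (Euc k)) (τ : ℝ) : ℝ :=
  ∫ x, heatDensity μ τ x * ‖gradient (logHeat μ τ) x‖ ^ 2

/-- The Fisher Information Rate `R^{(k)}(μ_τ) = ∫ p_τ ‖∇² log p_τ‖_F²`. -/
def FisherInfoRate {k : ℕ} (μ : Measure (Euc k)) (τ : ℝ) : ℝ :=
  ∫ x, heatDensity μ τ x * hessFrobSq (logHeat μ τ) x

/-- The posterior mean `m_τ(x)` of a clean sample given noisy observation `x`. -/
def postMean {k : ℕ} (μ : Measure (Euc k)) (τ : ℝ) (x : Euc k) : Euc k :=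
  (heatDensity μ τ x)⁻¹ • ∫ y, gaussDensity k τ (x - y) • y ∂μ

open Real

set_option maxHeartbeats 1000000
set_option synthInstance.maxHeartbeats 400000

variable {k : ℕ}

lemma gauss_pos {τ : ℝ} (hτ : 0 < τ) (z : Euc k) : 0 < gaussDensity k τ z := by
  unfold gaussDensity
  positivity

lemma gauss_nonneg {τ : ℝ} (hτ : 0 < τ) (z : Euc k) : 0 ≤ gaussDensity k τ z :=
  (gauss_pos hτ z).le

lemma gauss_continuous {τ : ℝ} (hτ : 0 < τ) : Continuous (gaussDensity k τ) := by
  unfold gaussDensity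
  fun_prop

lemma gauss_le {τ : ℝ} (hτ : 0 < τ) (z : Euc k) :
    gaussDensity k τ z ≤ (2 * Real.pi * τ) ^ (-(k : ℝ) / 2) := by
  unfold gaussDensity
  have h1 : Real.exp (-‖z‖ ^ 2 / (2 * τ)) ≤ 1 := by
    rw [Real.exp_le_one_iff, neg_div, neg_nonpos]
    positivity
  calc (2 * Real.pi * τ) ^ (-(k : ℝ) / 2) * Real.exp (-‖z‖ ^ 2 / (2 * τ))
      ≤ (2 * Real.pi * τ) ^ (-(k : ℝ) / 2) * 1 :=
        mul_le_mul_of_nonneg_left h1 (by positivity)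
    _ = _ := mul_one _

lemma gauss_eq_exp {τ : ℝ} (z : Euc k) :
    gaussDensity k τ z = (2 * Real.pi * τ) ^ (-(k : ℝ) / 2) * Real.exp (-(2*τ)⁻¹ * ‖z‖ ^ 2) := by
  unfold gaussDensity
  congr 1
  field_simp

lemma integrable_rexp_neg_mul_sq_norm {b : ℝ} (hb : 0 < b) :
    Integrable (fun z : Euc k => Real.exp (-b * ‖z‖^2)) := by
  have h := (GaussianFourier.integrable_cexp_neg_mul_sq_norm_add
    (V := Euc k) (b := (b:ℂ)) (by simpa using hb) 0 0).re
  apply h.congr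
  filter_upwards with z
  simp [← Complex.ofReal_pow, ← Complex.ofReal_mul, ← Complex.ofReal_neg, Complex.exp_ofReal_re]

lemma gauss_integrable {τ : ℝ} (hτ : 0 < τ) : Integrable (gaussDensity k τ) := by
  have h : Integrable (fun z : Euc k =>
      (2 * Real.pi * τ) ^ (-(k : ℝ) / 2) * Real.exp (-(2*τ)⁻¹ * ‖z‖ ^ 2)) :=
    (integrable_rexp_neg_mul_sq_norm (by positivity)).const_mul _
  exact h.congr (Filter.Eventually.of_forall fun z => (gauss_eq_exp z).symm)

lemma gauss_integral {τ : ℝ} (hτ : 0 < τ) : ∫ z : Euc k, gaussDensity k τ z = 1 := by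
  rw [MeasureTheory.integral_congr_ae (Filter.Eventually.of_forall (fun z => gauss_eq_exp z)), integral_const_mul,
    GaussianFourier.integral_rexp_neg_mul_sq_norm (by positivity : (0:ℝ) < (2*τ)⁻¹),
    finrank_euclideanSpace, Fintype.card_fin]
  have h2 : π / (2*τ)⁻¹ = 2 * π * τ := by field_simp
  rw [h2, neg_div, Real.rpow_neg (by positivity)]
  exact inv_mul_cancel₀ (by positivity)

lemma gauss_mul_gauss {s τ : ℝ} (hs : 0 < s) (hτ : 0 < τ) (z w : Euc k) :
    gaussDensity k s w * gaussDensity k τ (z - w) =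
      gaussDensity k (s + τ) z *
        gaussDensity k (s * τ / (s + τ)) (w - (s / (s + τ)) • z) := by
  unfold gaussDensity
  have hst : 0 < s + τ := by linarith
  have hc : (2 * π * s) ^ (-(k:ℝ) / 2) * (2 * π * τ) ^ (-(k:ℝ) / 2)
      = (2 * π * (s + τ)) ^ (-(k:ℝ) / 2) * (2 * π * (s * τ / (s + τ))) ^ (-(k:ℝ) / 2) := by
    rw [← Real.mul_rpow (by positivity) (by positivity),
        ← Real.mul_rpow (by positivity) (by positivity)]
    congr 1
    field_simp
  have he : -‖w‖ ^ 2 / (2 * s) + -‖z - w‖ ^ 2 / (2 * τ)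
      = -‖z‖ ^ 2 / (2 * (s + τ))
        + -‖w - (s / (s + τ)) • z‖ ^ 2 / (2 * (s * τ / (s + τ))) := by
    have h1 : ‖z - w‖^2 = ‖z‖^2 - 2 * inner ℝ z w + ‖w‖^2 := norm_sub_sq_real z w
    have h2 : ‖w - (s / (s + τ)) • z‖^2
        = ‖w‖^2 - 2 * (s / (s + τ)) * inner ℝ w z + (s / (s + τ))^2 * ‖z‖^2 := by
      rw [norm_sub_sq_real, inner_smul_right, norm_smul]
      rw [Real.norm_eq_abs, abs_of_pos (by positivity), mul_pow]
      ring
    have h3 : (inner ℝ z w : ℝ) = inner ℝ w z := real_inner_comm w z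
    rw [h1, h2, h3]
    field_simp
    ring
  calc (2 * π * s) ^ (-(k:ℝ) / 2) * rexp (-‖w‖ ^ 2 / (2 * s))
        * ((2 * π * τ) ^ (-(k:ℝ) / 2) * rexp (-‖z - w‖ ^ 2 / (2 * τ)))
      = (2 * π * s) ^ (-(k:ℝ) / 2) * (2 * π * τ) ^ (-(k:ℝ) / 2)
        * rexp (-‖w‖ ^ 2 / (2 * s) + -‖z - w‖ ^ 2 / (2 * τ)) := by
        rw [Real.exp_add]; ring
    _ = (2 * π * (s + τ)) ^ (-(k:ℝ) / 2) * (2 * π * (s * τ / (s + τ))) ^ (-(k:ℝ) / 2)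
        * rexp (-‖z‖ ^ 2 / (2 * (s + τ))
            + -‖w - (s / (s + τ)) • z‖ ^ 2 / (2 * (s * τ / (s + τ)))) := by
        rw [← hc, ← he]
    _ = _ := by rw [Real.exp_add]; ring

lemma gauss_conv {s τ : ℝ} (hs : 0 < s) (hτ : 0 < τ) (z : Euc k) :
    ∫ w : Euc k, gaussDensity k s w * gaussDensity k τ (z - w)
      = gaussDensity k (s + τ) z := by
  have hst : 0 < s + τ := by linarith
  have hτ' : 0 < s * τ / (s + τ) := by positivity
  calc ∫ w : Euc k, gaussDensity k s w * gaussDensity k τ (z - w)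
      = ∫ w : Euc k, gaussDensity k (s + τ) z
          * gaussDensity k (s * τ / (s + τ)) (w - (s / (s + τ)) • z) := by
        exact MeasureTheory.integral_congr_ae (Filter.Eventually.of_forall
          (fun w => gauss_mul_gauss hs hτ z w))
    _ = gaussDensity k (s + τ) z
          * ∫ w : Euc k, gaussDensity k (s * τ / (s + τ)) (w - (s / (s + τ)) • z) := by
        rw [integral_const_mul]
    _ = gaussDensity k (s + τ) z := by
        rw [integral_sub_right_eq_self (gaussDensity k (s * τ / (s + τ))), gauss_integral hτ',
          mul_one]

/-- The gradient of the Gaussian density. -/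
def gaussGrad (k : ℕ) (τ : ℝ) (z : Euc k) : Euc k :=
  -(τ⁻¹ * gaussDensity k τ z) • z

lemma hasGradientAt_gauss {τ : ℝ} (hτ : 0 < τ) (z : Euc k) :
    HasGradientAt (gaussDensity k τ) (gaussGrad k τ z) z := by
  rw [hasGradientAt_iff_hasFDerivAt]
  have h1 : HasFDerivAt (fun z : Euc k => ‖z‖ ^ 2) (2 • innerSL ℝ z) z :=
    (hasStrictFDerivAt_norm_sq z).hasFDerivAt
  have h2 : HasFDerivAt (fun z : Euc k => -(2*τ)⁻¹ * ‖z‖ ^ 2)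
      ((-(2*τ)⁻¹ : ℝ) • (2 • innerSL ℝ z)) z := h1.const_mul _
  have h3 := h2.exp
  have h4 := h3.const_mul ((2 * Real.pi * τ) ^ (-(k : ℝ) / 2))
  have h5 : HasFDerivAt (gaussDensity k τ)
      (((2 * Real.pi * τ) ^ (-(k : ℝ) / 2)) •
        Real.exp (-(2*τ)⁻¹ * ‖z‖ ^ 2) • ((-(2*τ)⁻¹ : ℝ) • (2 • innerSL ℝ z))) z := by
    apply h4.congr_of_eventuallyEq
    filter_upwards with u
    rw [gauss_eq_exp]
  refine h5.congr_fderiv ?_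
  ext u
  simp only [InnerProductSpace.toDual_apply_apply, gaussGrad, ContinuousLinearMap.smul_apply,
    innerSL_apply_apply, smul_eq_mul, ContinuousLinearMap.coe_smul', Pi.smul_apply,
    inner_smul_left, map_neg]
  rw [gauss_eq_exp]
  simp only [conj_trivial]
  ring

lemma gaussGrad_norm {τ : ℝ} (hτ : 0 < τ) (z : Euc k) :
    ‖gaussGrad k τ z‖ = τ⁻¹ * gaussDensity k τ z * ‖z‖ := by
  rw [gaussGrad, norm_smul, Real.norm_eq_abs, abs_neg,
    abs_of_nonneg (mul_nonneg (inv_nonneg.2 hτ.le) (gauss_nonneg hτ z))]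

lemma mul_exp_neg_le {β t : ℝ} (hβ : 0 < β) (ht : 0 ≤ t) :
    t * Real.exp (-(β * t)) ≤ β⁻¹ := by
  have h2 : β * t ≤ Real.exp (β * t) := by linarith [Real.add_one_le_exp (β * t)]
  have he : (0:ℝ) < Real.exp (β * t) := Real.exp_pos _
  have ht2 : t ≤ β⁻¹ * Real.exp (β * t) := by
    rw [inv_mul_eq_div, le_div_iff₀ hβ, mul_comm]
    exact h2
  calc t * Real.exp (-(β * t)) ≤ (β⁻¹ * Real.exp (β * t)) * Real.exp (-(β * t)) :=
        mul_le_mul_of_nonneg_right ht2 (Real.exp_nonneg _)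
    _ = β⁻¹ * Real.exp (β * t + -(β * t)) := by rw [Real.exp_add]; ring
    _ = β⁻¹ := by simp

/-- `‖z‖² e^{-‖z‖²/(2τ)} ≤ 4τ e^{-‖z‖²/(4τ)}`. -/
lemma sq_norm_mul_exp_le {τ : ℝ} (hτ : 0 < τ) (z : Euc k) :
    ‖z‖^2 * Real.exp (-‖z‖ ^ 2 / (2 * τ)) ≤ 4 * τ * Real.exp (-(4*τ)⁻¹ * ‖z‖^2) := by
  have key : ‖z‖^2 * Real.exp (-((4*τ)⁻¹ * ‖z‖^2)) ≤ 4 * τ :=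
    (mul_exp_neg_le (by positivity) (by positivity)).trans_eq (by rw [inv_inv])
  have hsplit : Real.exp (-‖z‖ ^ 2 / (2 * τ))
      = Real.exp (-((4*τ)⁻¹ * ‖z‖^2)) * Real.exp (-(4*τ)⁻¹ * ‖z‖^2) := by
    rw [← Real.exp_add]
    congr 1
    field_simp
    ring
  rw [hsplit, ← mul_assoc]
  exact mul_le_mul_of_nonneg_right key (Real.exp_nonneg _)

/-- uniform bound on the norm of the Gaussian gradient. -/
lemma gaussGrad_norm_le {τ : ℝ} (hτ : 0 < τ) (z : Euc k) :
    ‖gaussGrad k τ z‖ ≤ τ⁻¹ * (2 * Real.pi * τ) ^ (-(k : ℝ) / 2) * (1 + 2 * τ) := by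
  rw [gaussGrad_norm hτ]
  unfold gaussDensity
  have h1 : ‖z‖ * Real.exp (-‖z‖ ^ 2 / (2 * τ)) ≤ 1 + 2 * τ := by
    have hr : ‖z‖ ≤ 1 + ‖z‖^2 := by nlinarith [norm_nonneg z, sq_nonneg (1 - ‖z‖)]
    have h2 : ‖z‖^2 * Real.exp (-((2*τ)⁻¹ * ‖z‖^2)) ≤ 2*τ :=
      (mul_exp_neg_le (by positivity) (by positivity)).trans_eq (by rw [inv_inv])
    have h3 : Real.exp (-‖z‖ ^ 2 / (2 * τ)) ≤ 1 := by
      rw [Real.exp_le_one_iff, neg_div, neg_nonpos]; positivity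
    have he : -‖z‖ ^ 2 / (2 * τ) = -((2*τ)⁻¹ * ‖z‖^2) := by field_simp
    calc ‖z‖ * Real.exp (-‖z‖ ^ 2 / (2 * τ))
        ≤ (1 + ‖z‖^2) * Real.exp (-‖z‖ ^ 2 / (2 * τ)) :=
          mul_le_mul_of_nonneg_right hr (Real.exp_nonneg _)
      _ = Real.exp (-‖z‖ ^ 2 / (2 * τ)) + ‖z‖^2 * Real.exp (-((2*τ)⁻¹ * ‖z‖^2)) := by
          rw [he]; ring
      _ ≤ 1 + 2*τ := add_le_add h3 h2
  calc τ⁻¹ * ((2 * Real.pi * τ) ^ (-(k : ℝ) / 2) * Real.exp (-‖z‖ ^ 2 / (2 * τ))) * ‖z‖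
      = τ⁻¹ * (2 * Real.pi * τ) ^ (-(k : ℝ) / 2) * (‖z‖ * Real.exp (-‖z‖ ^ 2 / (2 * τ))) := by
        ring
    _ ≤ τ⁻¹ * (2 * Real.pi * τ) ^ (-(k : ℝ) / 2) * (1 + 2 * τ) := by
        exact mul_le_mul_of_nonneg_left h1 (by positivity)

def heatGrad {k : ℕ} (μ : Measure (Euc k)) (τ : ℝ) (x : Euc k) : Euc k :=
  ∫ y, gaussGrad k τ (x - y) ∂μ

lemma gaussGrad_continuous {τ : ℝ} (hτ : 0 < τ) : Continuous (gaussGrad k τ) := by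
  unfold gaussGrad
  exact ((continuous_const.mul (gauss_continuous hτ)).neg).smul continuous_id

variable {μ : Measure (Euc k)} [IsProbabilityMeasure μ]

lemma integrable_gauss_shift {τ : ℝ} (hτ : 0 < τ) (x : Euc k) :
    Integrable (fun y => gaussDensity k τ (x - y)) μ := by
  apply Integrable.mono' (integrable_const ((2 * Real.pi * τ) ^ (-(k : ℝ) / 2)))
  · exact ((gauss_continuous hτ).comp (continuous_const.sub continuous_id)).aestronglyMeasurable
  · filter_upwards with y
    rw [Real.norm_eq_abs, abs_of_nonneg (gauss_nonneg hτ _)]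
    exact gauss_le hτ _

lemma integrable_gaussGrad_shift {τ : ℝ} (hτ : 0 < τ) (x : Euc k) :
    Integrable (fun y => gaussGrad k τ (x - y)) μ := by
  apply Integrable.mono'
    (integrable_const (τ⁻¹ * (2 * Real.pi * τ) ^ (-(k : ℝ) / 2) * (1 + 2 * τ)))
  · exact ((gaussGrad_continuous hτ).comp (continuous_const.sub continuous_id)).aestronglyMeasurable
  · filter_upwards with y
    exact gaussGrad_norm_le hτ _

lemma heat_nonneg {τ : ℝ} (hτ : 0 < τ) (x : Euc k) : 0 ≤ heatDensity μ τ x :=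
  integral_nonneg fun y => gauss_nonneg hτ _

lemma heat_le {τ : ℝ} (hτ : 0 < τ) (x : Euc k) :
    heatDensity μ τ x ≤ (2 * Real.pi * τ) ^ (-(k : ℝ) / 2) := by
  calc heatDensity μ τ x ≤ ∫ _, (2 * Real.pi * τ) ^ (-(k : ℝ) / 2) ∂μ :=
        integral_mono (integrable_gauss_shift hτ x) (integrable_const _)
          (fun y => gauss_le hτ _)
    _ = (2 * Real.pi * τ) ^ (-(k : ℝ) / 2) := by simp

lemma ae_mem_ball {R : ℝ} (hR : μ (Metric.closedBall (0 : Euc k) R)ᶜ = 0) :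
    ∀ᵐ y ∂μ, y ∈ Metric.closedBall (0 : Euc k) R := by
  rw [MeasureTheory.ae_iff]
  convert hR using 2
  rfl

lemma heat_pos {τ R : ℝ} (hτ : 0 < τ) (hR0 : 0 ≤ R)
    (hR : μ (Metric.closedBall (0 : Euc k) R)ᶜ = 0) (x : Euc k) :
    0 < heatDensity μ τ x := by
  set c : ℝ := (2 * Real.pi * τ) ^ (-(k : ℝ) / 2) * Real.exp (-(‖x‖ + R)^2 / (2 * τ)) with hc
  have hcpos : 0 < c := by positivity
  have hbd : ∀ᵐ y ∂μ, c ≤ gaussDensity k τ (x - y) := by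
    filter_upwards [ae_mem_ball hR] with y hy
    rw [Metric.mem_closedBall, dist_zero_right] at hy
    unfold gaussDensity
    apply mul_le_mul_of_nonneg_left _ (by positivity)
    apply Real.exp_le_exp.2
    rw [div_le_div_iff_of_pos_right (by positivity), neg_le_neg_iff]
    have h1 : ‖x - y‖ ≤ ‖x‖ + R := (norm_sub_le x y).trans (by linarith)
    nlinarith [norm_nonneg (x - y)]
  calc 0 < c := hcpos
    _ = ∫ _, c ∂μ := by simp
    _ ≤ heatDensity μ τ x :=
        integral_mono_ae (integrable_const c) (integrable_gauss_shift hτ x) hbd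

lemma hasGradientAt_gauss_shift {τ : ℝ} (hτ : 0 < τ) (y x : Euc k) :
    HasGradientAt (fun x => gaussDensity k τ (x - y)) (gaussGrad k τ (x - y)) x := by
  rw [hasGradientAt_iff_hasFDerivAt]
  have h := (hasGradientAt_iff_hasFDerivAt.1 (hasGradientAt_gauss hτ (x - y))).comp x
    ((hasFDerivAt_id x).sub_const y)
  exact h

lemma hasGradientAt_heat {τ : ℝ} (hτ : 0 < τ) (x₀ : Euc k) :
    HasGradientAt (heatDensity μ τ) (heatGrad μ τ x₀) x₀ := by
  rw [hasGradientAt_iff_hasFDerivAt]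
  set L := InnerProductSpace.toDual ℝ (Euc k)
  have key : HasFDerivAt (fun x => ∫ y, gaussDensity k τ (x - y) ∂μ)
      (∫ y, L (gaussGrad k τ (x₀ - y)) ∂μ) x₀ := by
    apply hasFDerivAt_integral_of_dominated_of_fderiv_le (𝕜 := ℝ)
      (F' := fun x y => L (gaussGrad k τ (x - y)))
      (bound := fun _ => τ⁻¹ * (2 * Real.pi * τ) ^ (-(k : ℝ) / 2) * (1 + 2 * τ))
      (hs := Metric.ball_mem_nhds _ one_pos)
    · filter_upwards with x
      exact (integrable_gauss_shift hτ x).aestronglyMeasurable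
    · exact integrable_gauss_shift hτ x₀
    · exact ((L.continuous.comp ((gaussGrad_continuous hτ).comp
        (continuous_const.sub continuous_id))).aestronglyMeasurable)
    · filter_upwards with y x _
      rw [L.norm_map]
      exact gaussGrad_norm_le hτ _
    · exact integrable_const _
    · filter_upwards with y x _
      exact hasGradientAt_iff_hasFDerivAt.1 (hasGradientAt_gauss_shift hτ y x)
  have hint : ∫ y, L (gaussGrad k τ (x₀ - y)) ∂μ = L (heatGrad μ τ x₀) := by
    exact ContinuousLinearMap.integral_comp_comm L.toContinuousLinearEquiv.toContinuousLinearMap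
      (integrable_gaussGrad_shift hτ x₀)
  rw [← hint]
  exact key

lemma heat_continuous {τ : ℝ} (hτ : 0 < τ) : Continuous (heatDensity μ τ) := by
  rw [continuous_iff_continuousAt]
  exact fun x => ((hasGradientAt_heat hτ x).differentiableAt).continuousAt

lemma heatGrad_le {τ : ℝ} (hτ : 0 < τ) (x : Euc k) :
    ‖heatGrad μ τ x‖ ≤ τ⁻¹ * (2 * Real.pi * τ) ^ (-(k : ℝ) / 2) * (1 + 2 * τ) := by
  calc ‖heatGrad μ τ x‖ ≤ ∫ y, ‖gaussGrad k τ (x - y)‖ ∂μ := norm_integral_le_integral_norm _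
    _ ≤ ∫ _, τ⁻¹ * (2 * Real.pi * τ) ^ (-(k : ℝ) / 2) * (1 + 2 * τ) ∂μ :=
        integral_mono ((integrable_gaussGrad_shift hτ x).norm) (integrable_const _)
          (fun y => gaussGrad_norm_le hτ _)
    _ = _ := by simp

lemma heatGrad_norm_le_score {τ R : ℝ} (hτ : 0 < τ) (hR0 : 0 ≤ R)
    (hR : μ (Metric.closedBall (0 : Euc k) R)ᶜ = 0) (x : Euc k) :
    ‖heatGrad μ τ x‖ ≤ τ⁻¹ * (‖x‖ + R) * heatDensity μ τ x := by
  calc ‖heatGrad μ τ x‖ ≤ ∫ y, ‖gaussGrad k τ (x - y)‖ ∂μ := norm_integral_le_integral_norm _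
    _ ≤ ∫ y, τ⁻¹ * (‖x‖ + R) * gaussDensity k τ (x - y) ∂μ := by
        apply integral_mono_ae ((integrable_gaussGrad_shift hτ x).norm)
          ((integrable_gauss_shift hτ x).const_mul _)
        filter_upwards [ae_mem_ball hR] with y hy
        rw [Metric.mem_closedBall, dist_zero_right] at hy
        rw [gaussGrad_norm hτ]
        have h1 : ‖x - y‖ ≤ ‖x‖ + R := (norm_sub_le x y).trans (by linarith)
        calc τ⁻¹ * gaussDensity k τ (x - y) * ‖x - y‖
            ≤ τ⁻¹ * gaussDensity k τ (x - y) * (‖x‖ + R) :=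
              mul_le_mul_of_nonneg_left h1
                (mul_nonneg (inv_nonneg.2 hτ.le) (gauss_nonneg hτ _))
          _ = τ⁻¹ * (‖x‖ + R) * gaussDensity k τ (x - y) := by ring
    _ = τ⁻¹ * (‖x‖ + R) * heatDensity μ τ x := by rw [integral_const_mul]; rfl

lemma hasGradientAt_logHeat {τ R : ℝ} (hτ : 0 < τ) (hR0 : 0 ≤ R)
    (hR : μ (Metric.closedBall (0 : Euc k) R)ᶜ = 0) (x : Euc k) :
    HasGradientAt (logHeat μ τ) ((heatDensity μ τ x)⁻¹ • heatGrad μ τ x) x := by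
  have hp : heatDensity μ τ x ≠ 0 := (heat_pos hτ hR0 hR x).ne'
  rw [hasGradientAt_iff_hasFDerivAt]
  have h1 := hasGradientAt_iff_hasFDerivAt.1 (hasGradientAt_heat (μ := μ) hτ x)
  have h2 := (Real.hasDerivAt_log hp).comp_hasFDerivAt x h1
  rw [_root_.map_smul]
  exact h2

lemma gradient_logHeat {τ R : ℝ} (hτ : 0 < τ) (hR0 : 0 ≤ R)
    (hR : μ (Metric.closedBall (0 : Euc k) R)ᶜ = 0) (x : Euc k) :
    gradient (logHeat μ τ) x = (heatDensity μ τ x)⁻¹ • heatGrad μ τ x :=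
  (hasGradientAt_logHeat hτ hR0 hR x).gradient

lemma fisher_eq {τ R : ℝ} (hτ : 0 < τ) (hR0 : 0 ≤ R)
    (hR : μ (Metric.closedBall (0 : Euc k) R)ᶜ = 0) :
    FisherInfo μ τ = ∫ x, ‖heatGrad μ τ x‖ ^ 2 / heatDensity μ τ x := by
  unfold FisherInfo
  apply integral_congr_ae
  filter_upwards with x
  rw [gradient_logHeat hτ hR0 hR x, norm_smul, Real.norm_eq_abs,
    abs_of_nonneg (inv_nonneg.2 (heat_nonneg (μ := μ) hτ x))]
  have hp : (0:ℝ) < heatDensity μ τ x := heat_pos hτ hR0 hR x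
  field_simp

lemma heatGrad_measurable {τ : ℝ} (hτ : 0 < τ) :
    Measurable (heatGrad μ τ) := by
  have h1 : Measurable (fderiv ℝ (heatDensity μ τ)) := measurable_fderiv ℝ _
  have h2 : heatGrad μ τ = fun x =>
      (InnerProductSpace.toDual ℝ (Euc k)).symm (fderiv ℝ (heatDensity μ τ) x) := by
    funext x
    rw [((hasGradientAt_heat hτ x).hasFDerivAt).fderiv]
    simp
  rw [h2]
  exact ((InnerProductSpace.toDual ℝ (Euc k)).symm.continuous.measurable).comp h1

section Conv

variable {s τ₁ : ℝ}

lemma heat_shift_integrable_vol (hs : 0 < s) (hτ₁ : 0 < τ₁) (x : Euc k) :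
    Integrable (fun w : Euc k => gaussDensity k s w * heatDensity μ τ₁ (x - w)) := by
  apply Integrable.mono' ((gauss_integrable hs).mul_const ((2 * Real.pi * τ₁) ^ (-(k : ℝ) / 2)))
  · exact ((gauss_continuous hs).mul ((heat_continuous hτ₁).comp
      (continuous_const.sub continuous_id))).aestronglyMeasurable
  · filter_upwards with w
    rw [Real.norm_eq_abs, abs_of_nonneg
      (mul_nonneg (gauss_nonneg hs w) (heat_nonneg hτ₁ _))]
    exact mul_le_mul_of_nonneg_left (heat_le hτ₁ _) (gauss_nonneg hs w)

lemma conv_heat (hs : 0 < s) (hτ₁ : 0 < τ₁) (x : Euc k) :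
    heatDensity μ (s + τ₁) x = ∫ w : Euc k, gaussDensity k s w * heatDensity μ τ₁ (x - w) := by
  have h1 : heatDensity μ (s + τ₁) x
      = ∫ y, ∫ w : Euc k, gaussDensity k s w * gaussDensity k τ₁ (x - y - w) ∂volume ∂μ := by
    apply integral_congr_ae
    filter_upwards with y
    rw [← gauss_conv hs hτ₁ (x - y)]
  rw [h1]
  have hint : Integrable (Function.uncurry
      (fun y w => gaussDensity k s w * gaussDensity k τ₁ (x - y - w))) (μ.prod volume) := by
    apply Integrable.mono' (g := fun z : Euc k × Euc k =>
      (1:ℝ) * ((2 * Real.pi * τ₁) ^ (-(k : ℝ) / 2) * gaussDensity k s z.2))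
    · exact (integrable_const (1:ℝ)).mul_prod ((gauss_integrable hs).const_mul _)
    · apply Continuous.aestronglyMeasurable
      apply Continuous.mul
      · exact (gauss_continuous hs).comp continuous_snd
      · exact (gauss_continuous hτ₁).comp
          ((continuous_const.sub continuous_fst).sub continuous_snd)
    · filter_upwards with z
      rw [Function.uncurry, Real.norm_eq_abs, abs_of_nonneg
        (mul_nonneg (gauss_nonneg hs _) (gauss_nonneg hτ₁ _)), one_mul, mul_comm
        ((2 * Real.pi * τ₁) ^ (-(k : ℝ) / 2))]
      exact mul_le_mul_of_nonneg_left (gauss_le hτ₁ _) (gauss_nonneg hs _)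
  rw [integral_integral_swap hint]
  apply integral_congr_ae
  filter_upwards with w
  rw [integral_const_mul]
  congr 1
  apply integral_congr_ae
  filter_upwards with y
  congr 1
  abel

lemma hasGradientAt_heat_shift (hτ : 0 < τ₁) (w x : Euc k) :
    HasGradientAt (fun x => heatDensity μ τ₁ (x - w)) (heatGrad μ τ₁ (x - w)) x := by
  rw [hasGradientAt_iff_hasFDerivAt]
  have h := (hasGradientAt_iff_hasFDerivAt.1 (hasGradientAt_heat (μ := μ) hτ (x - w))).comp x
    ((hasFDerivAt_id x).sub_const w)
  exact h

lemma smul_heatGrad_integrable_vol (hs : 0 < s) (hτ₁ : 0 < τ₁) (x : Euc k) :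
    Integrable (fun w : Euc k => gaussDensity k s w • heatGrad μ τ₁ (x - w)) := by
  apply Integrable.mono' ((gauss_integrable hs).mul_const
    (τ₁⁻¹ * (2 * Real.pi * τ₁) ^ (-(k : ℝ) / 2) * (1 + 2 * τ₁)))
  · exact ((gauss_continuous hs).aestronglyMeasurable).smul
      (((heatGrad_measurable hτ₁).comp
        (measurable_const.sub measurable_id)).aestronglyMeasurable)
  · filter_upwards with w
    rw [norm_smul, Real.norm_eq_abs, abs_of_nonneg (gauss_nonneg hs w)]
    exact mul_le_mul_of_nonneg_left (heatGrad_le hτ₁ _) (gauss_nonneg hs w)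

lemma heatGrad_conv (hs : 0 < s) (hτ₁ : 0 < τ₁) (x₀ : Euc k) :
    heatGrad μ (s + τ₁) x₀ = ∫ w : Euc k, gaussDensity k s w • heatGrad μ τ₁ (x₀ - w) := by
  have hst : 0 < s + τ₁ := by linarith
  set L := InnerProductSpace.toDual ℝ (Euc k)
  have key : HasFDerivAt (fun x => ∫ w : Euc k, gaussDensity k s w * heatDensity μ τ₁ (x - w))
      (∫ w : Euc k, gaussDensity k s w • L (heatGrad μ τ₁ (x₀ - w))) x₀ := by
    apply hasFDerivAt_integral_of_dominated_of_fderiv_le (𝕜 := ℝ)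
      (F' := fun x w => gaussDensity k s w • L (heatGrad μ τ₁ (x - w)))
      (bound := fun w => gaussDensity k s w *
        (τ₁⁻¹ * (2 * Real.pi * τ₁) ^ (-(k : ℝ) / 2) * (1 + 2 * τ₁)))
      (hs := Metric.ball_mem_nhds _ one_pos)
    · filter_upwards with x
      exact (heat_shift_integrable_vol hs hτ₁ x).aestronglyMeasurable
    · exact heat_shift_integrable_vol hs hτ₁ x₀
    · exact ((gauss_continuous hs).aestronglyMeasurable).smul
        ((L.continuous.measurable.comp ((heatGrad_measurable hτ₁).comp
          (measurable_const.sub measurable_id))).aestronglyMeasurable)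
    · filter_upwards with w x _
      have hn : ‖gaussDensity k s w • L (heatGrad μ τ₁ (x - w))‖
          = ‖gaussDensity k s w‖ * ‖L (heatGrad μ τ₁ (x - w))‖ := norm_smul _ _
      rw [hn, Real.norm_eq_abs, abs_of_nonneg (gauss_nonneg hs w)]
      refine mul_le_mul_of_nonneg_left ?_ (gauss_nonneg hs w)
      rw [L.norm_map]
      exact heatGrad_le hτ₁ _
    · exact (gauss_integrable hs).mul_const _
    · filter_upwards with w x _
      have h := hasGradientAt_iff_hasFDerivAt.1 (hasGradientAt_heat_shift (μ := μ) hτ₁ w x)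
      exact h.const_mul (gaussDensity k s w)
  have key2 : HasFDerivAt (heatDensity μ (s + τ₁))
      (∫ w : Euc k, gaussDensity k s w • L (heatGrad μ τ₁ (x₀ - w))) x₀ := by
    apply key.congr_of_eventuallyEq
    filter_upwards with x
    exact conv_heat hs hτ₁ x
  have h3 := hasGradientAt_iff_hasFDerivAt.1 (hasGradientAt_heat (μ := μ) hst x₀)
  have h4 : ∫ w : Euc k, gaussDensity k s w • L (heatGrad μ τ₁ (x₀ - w))
      = L (∫ w : Euc k, gaussDensity k s w • heatGrad μ τ₁ (x₀ - w)) := by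
    have h5 : (fun w : Euc k => gaussDensity k s w • L (heatGrad μ τ₁ (x₀ - w)))
        = fun w : Euc k => L.toContinuousLinearEquiv.toContinuousLinearMap
            (gaussDensity k s w • heatGrad μ τ₁ (x₀ - w)) := by
      funext w
      simp
    rw [h5]
    exact ContinuousLinearMap.integral_comp_comm L.toContinuousLinearEquiv.toContinuousLinearMap
      (smul_heatGrad_integrable_vol hs hτ₁ x₀)
  rw [h4] at key2
  have := key2.unique h3
  exact (L.injective (by rw [this])).symm

/-- Cauchy–Schwarz for weighted integrals. -/
lemma cs_integral {ν : Measure (Euc k)} [SigmaFinite ν] (q r : Euc k → ℝ)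
    (hq : ∀ w, 0 ≤ q w) (hr : ∀ w, 0 ≤ r w)
    (Iq : Integrable q ν) (Iqr : Integrable (fun w => q w * r w) ν)
    (Iqr2 : Integrable (fun w => q w * r w ^ 2) ν) :
    (∫ w, q w * r w ∂ν) ^ 2 ≤ (∫ w, q w ∂ν) * ∫ w, q w * r w ^ 2 ∂ν := by
  set I0 := ∫ w, q w ∂ν with hI0
  set I1 := ∫ w, q w * r w ∂ν with hI1
  set I2 := ∫ w, q w * r w ^ 2 ∂ν with hI2
  have hI0nn : 0 ≤ I0 := integral_nonneg hq
  rcases eq_or_lt_of_le hI0nn with h0 | h0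
  · -- I0 = 0 : q is a.e. zero
    have hq0 : ∀ᵐ w ∂ν, q w = 0 := by
      have := (integral_eq_zero_iff_of_nonneg hq Iq).1 h0.symm
      filter_upwards [Filter.EventuallyEq.symm this] with w hw
      exact hw.symm ▸ rfl
    have hI1' : I1 = 0 := by
      rw [hI1, integral_eq_zero_iff_of_nonneg (fun w => mul_nonneg (hq w) (hr w)) Iqr]
      filter_upwards [hq0] with w hw
      simp [hw]
    rw [hI1']
    have hI2nn : 0 ≤ I2 := integral_nonneg (fun w => mul_nonneg (hq w) (sq_nonneg _))
    nlinarith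
  · set t := I1 / I0 with ht
    have key : 0 ≤ I2 - 2 * t * I1 + t ^ 2 * I0 := by
      have hnn : 0 ≤ ∫ w, q w * (r w - t) ^ 2 ∂ν :=
        integral_nonneg (fun w => mul_nonneg (hq w) (sq_nonneg _))
      have hexp : ∫ w, q w * (r w - t) ^ 2 ∂ν = I2 - 2 * t * I1 + t ^ 2 * I0 := by
        have : (fun w => q w * (r w - t) ^ 2)
            = fun w => q w * r w ^ 2 - 2 * t * (q w * r w) + t ^ 2 * q w := by
          funext w; ring
        have hA : Integrable (fun w => q w * r w ^ 2 - 2 * t * (q w * r w)) ν :=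
          Iqr2.sub (Iqr.const_mul _)
        have hB : Integrable (fun w => t ^ 2 * q w) ν := Iq.const_mul _
        rw [this, integral_add hA hB, integral_sub Iqr2 (Iqr.const_mul _),
          integral_const_mul, integral_const_mul]
      linarith [hexp ▸ hnn]
    have h2 : I2 - 2 * t * I1 + t ^ 2 * I0 = I2 - I1 ^ 2 / I0 := by
      rw [ht]; field_simp; ring
    rw [h2] at key
    have := mul_le_mul_of_nonneg_right (by linarith : I1 ^ 2 / I0 ≤ I2) hI0nn
    calc I1 ^ 2 = I1 ^ 2 / I0 * I0 := by field_simp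
      _ ≤ I2 * I0 := this
      _ = I0 * I2 := mul_comm _ _

def scoreE {k : ℕ} (μ : Measure (Euc k)) (τ : ℝ) (x : Euc k) : ℝ :=
  ‖heatGrad μ τ x‖ ^ 2 / heatDensity μ τ x

lemma scoreE_nonneg {τ : ℝ} (hτ : 0 < τ) (x : Euc k) : 0 ≤ scoreE μ τ x :=
  div_nonneg (sq_nonneg _) (heat_nonneg hτ x)

lemma scoreE_measurable {τ : ℝ} (hτ : 0 < τ) : Measurable (scoreE μ τ) :=
  (((heatGrad_measurable hτ).norm.pow_const 2)).div (heat_continuous hτ).measurable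

lemma scoreE_le {τ R : ℝ} (hτ : 0 < τ) (hR0 : 0 ≤ R)
    (hR : μ (Metric.closedBall (0 : Euc k) R)ᶜ = 0) (z : Euc k) :
    scoreE μ τ z ≤ (τ⁻¹ * (‖z‖ + R)) ^ 2 * heatDensity μ τ z := by
  have hp : 0 < heatDensity μ τ z := heat_pos hτ hR0 hR z
  rw [scoreE, div_le_iff₀ hp]
  have h1 : ‖heatGrad μ τ z‖ ≤ τ⁻¹ * (‖z‖ + R) * heatDensity μ τ z :=
    heatGrad_norm_le_score hτ hR0 hR z
  have h2 : ‖heatGrad μ τ z‖ ^ 2 ≤ (τ⁻¹ * (‖z‖ + R) * heatDensity μ τ z) ^ 2 := by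
    apply pow_le_pow_left₀ (norm_nonneg _) h1
  calc ‖heatGrad μ τ z‖ ^ 2 ≤ (τ⁻¹ * (‖z‖ + R) * heatDensity μ τ z) ^ 2 := h2
    _ = (τ⁻¹ * (‖z‖ + R)) ^ 2 * heatDensity μ τ z * heatDensity μ τ z := by ring

lemma gauss_mul_sq_integrable {s : ℝ} (hs : 0 < s) (a : ℝ) (ha : 0 ≤ a) :
    Integrable (fun w : Euc k => (a + ‖w‖) ^ 2 * gaussDensity k s w) := by
  have hbound : ∀ w : Euc k, (a + ‖w‖) ^ 2 * gaussDensity k s w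
      ≤ 2 * a ^ 2 * gaussDensity k s w
        + 8 * s * (2 * Real.pi * s) ^ (-(k : ℝ) / 2) * Real.exp (-(4*s)⁻¹ * ‖w‖^2) := by
    intro w
    have h1 : (a + ‖w‖) ^ 2 ≤ 2 * a ^ 2 + 2 * ‖w‖ ^ 2 := by nlinarith [sq_nonneg (a - ‖w‖)]
    have h2 : ‖w‖ ^ 2 * gaussDensity k s w
        ≤ (2 * Real.pi * s) ^ (-(k : ℝ) / 2) * (4 * s * Real.exp (-(4*s)⁻¹ * ‖w‖^2)) := by
      unfold gaussDensity
      calc ‖w‖^2 * ((2 * Real.pi * s) ^ (-(k:ℝ)/2) * Real.exp (-‖w‖^2/(2*s)))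
          = (2 * Real.pi * s) ^ (-(k:ℝ)/2) * (‖w‖^2 * Real.exp (-‖w‖^2/(2*s))) := by ring
        _ ≤ (2 * Real.pi * s) ^ (-(k:ℝ)/2) * (4*s*Real.exp (-(4*s)⁻¹*‖w‖^2)) :=
            mul_le_mul_of_nonneg_left (sq_norm_mul_exp_le hs w) (by positivity)
    calc (a + ‖w‖) ^ 2 * gaussDensity k s w
        ≤ (2 * a ^ 2 + 2 * ‖w‖ ^ 2) * gaussDensity k s w :=
          mul_le_mul_of_nonneg_right h1 (gauss_nonneg hs w)
      _ = 2 * a ^ 2 * gaussDensity k s w + 2 * (‖w‖ ^ 2 * gaussDensity k s w) := by ring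
      _ ≤ 2 * a ^ 2 * gaussDensity k s w
          + 2 * ((2 * Real.pi * s) ^ (-(k : ℝ) / 2) * (4 * s * Real.exp (-(4*s)⁻¹ * ‖w‖^2))) := by
          have := mul_le_mul_of_nonneg_left h2 (by norm_num : (0:ℝ) ≤ 2)
          linarith
      _ = 2 * a ^ 2 * gaussDensity k s w
          + 8 * s * (2 * Real.pi * s) ^ (-(k : ℝ) / 2) * Real.exp (-(4*s)⁻¹ * ‖w‖^2) := by ring
  apply Integrable.mono' (((gauss_integrable hs).const_mul (2 * a ^ 2)).add
    ((integrable_rexp_neg_mul_sq_norm (by positivity : (0:ℝ) < (4*s)⁻¹)).const_mul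
      (8 * s * (2 * Real.pi * s) ^ (-(k : ℝ) / 2))))
  · exact ((continuous_const.add continuous_norm).pow 2).mul (gauss_continuous hs)
      |>.aestronglyMeasurable
  · filter_upwards with w
    rw [Real.norm_eq_abs, abs_of_nonneg (mul_nonneg (sq_nonneg _) (gauss_nonneg hs w))]
    exact hbound w

lemma gauss_scoreE_integrable {s τ₁ R : ℝ} (hs : 0 < s) (hτ₁ : 0 < τ₁) (hR0 : 0 ≤ R)
    (hR : μ (Metric.closedBall (0 : Euc k) R)ᶜ = 0) (x : Euc k) :
    Integrable (fun w : Euc k => gaussDensity k s w * scoreE μ τ₁ (x - w)) := by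
  set C₁ : ℝ := (2 * Real.pi * τ₁) ^ (-(k : ℝ) / 2) with hC₁
  apply Integrable.mono'
    ((gauss_mul_sq_integrable hs (‖x‖ + R) (by positivity)).const_mul ((τ₁⁻¹)^2 * C₁))
  · exact ((gauss_continuous hs).measurable.mul ((scoreE_measurable hτ₁).comp
      (measurable_const.sub measurable_id))).aestronglyMeasurable
  · filter_upwards with w
    rw [Real.norm_eq_abs, abs_of_nonneg (mul_nonneg (gauss_nonneg hs w)
      (scoreE_nonneg hτ₁ _))]
    have h1 : scoreE μ τ₁ (x - w) ≤ (τ₁⁻¹ * (‖x - w‖ + R)) ^ 2 * heatDensity μ τ₁ (x - w) :=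
      scoreE_le hτ₁ hR0 hR _
    have h2 : ‖x - w‖ + R ≤ (‖x‖ + R) + ‖w‖ := by
      have := norm_sub_le x w
      linarith
    have h3 : scoreE μ τ₁ (x - w) ≤ (τ₁⁻¹)^2 * ((‖x‖ + R) + ‖w‖) ^ 2 * C₁ := by
      calc scoreE μ τ₁ (x - w) ≤ (τ₁⁻¹ * (‖x - w‖ + R)) ^ 2 * heatDensity μ τ₁ (x - w) := h1
        _ ≤ (τ₁⁻¹ * ((‖x‖ + R) + ‖w‖)) ^ 2 * C₁ := by
            apply mul_le_mul (by
              apply pow_le_pow_left₀ (by positivity)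
              exact mul_le_mul_of_nonneg_left h2 (by positivity))
              (heat_le hτ₁ _) (heat_nonneg hτ₁ _) (by positivity)
        _ = (τ₁⁻¹)^2 * ((‖x‖ + R) + ‖w‖) ^ 2 * C₁ := by ring
    calc gaussDensity k s w * scoreE μ τ₁ (x - w)
        ≤ gaussDensity k s w * ((τ₁⁻¹)^2 * ((‖x‖ + R) + ‖w‖) ^ 2 * C₁) :=
          mul_le_mul_of_nonneg_left h3 (gauss_nonneg hs w)
      _ = (τ₁⁻¹)^2 * C₁ * (((‖x‖ + R) + ‖w‖) ^ 2 * gaussDensity k s w) := by ring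

lemma scoreE_conv_le {s τ₁ R : ℝ} (hs : 0 < s) (hτ₁ : 0 < τ₁) (hR0 : 0 ≤ R)
    (hR : μ (Metric.closedBall (0 : Euc k) R)ᶜ = 0) (x : Euc k) :
    scoreE μ (s + τ₁) x ≤ ∫ w : Euc k, gaussDensity k s w * scoreE μ τ₁ (x - w) := by
  have hst : 0 < s + τ₁ := by linarith
  set q : Euc k → ℝ := fun w => gaussDensity k s w * heatDensity μ τ₁ (x - w) with hq
  set r : Euc k → ℝ := fun w => ‖heatGrad μ τ₁ (x - w)‖ / heatDensity μ τ₁ (x - w) with hr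
  have hppos : ∀ w : Euc k, 0 < heatDensity μ τ₁ (x - w) :=
    fun w => heat_pos hτ₁ hR0 hR _
  have hqnn : ∀ w, 0 ≤ q w := fun w => mul_nonneg (gauss_nonneg hs w) (heat_nonneg hτ₁ _)
  have hrnn : ∀ w, 0 ≤ r w := fun w => div_nonneg (norm_nonneg _) (heat_nonneg hτ₁ _)
  have hqr : ∀ w, q w * r w = ‖gaussDensity k s w • heatGrad μ τ₁ (x - w)‖ := by
    intro w
    have hpne : heatDensity μ τ₁ (x - w) ≠ 0 := (hppos w).ne'
    rw [norm_smul, Real.norm_eq_abs, abs_of_nonneg (gauss_nonneg hs w), hq, hr]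
    field_simp
  have hqr2 : ∀ w, q w * r w ^ 2 = gaussDensity k s w * scoreE μ τ₁ (x - w) := by
    intro w
    have hpne : heatDensity μ τ₁ (x - w) ≠ 0 := (hppos w).ne'
    rw [hq, hr, scoreE, div_pow]
    field_simp
  have Iq : Integrable q := heat_shift_integrable_vol hs hτ₁ x
  have Iqr : Integrable (fun w => q w * r w) := by
    apply (smul_heatGrad_integrable_vol (μ := μ) hs hτ₁ x).norm.congr
    filter_upwards with w
    exact (hqr w).symm
  have Iqr2 : Integrable (fun w => q w * r w ^ 2) := by
    apply (gauss_scoreE_integrable (μ := μ) hs hτ₁ hR0 hR x).congr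
    filter_upwards with w
    exact (hqr2 w).symm
  have hG2 : ‖heatGrad μ (s + τ₁) x‖ ≤ ∫ w, q w * r w := by
    rw [heatGrad_conv hs hτ₁ x]
    calc ‖∫ w : Euc k, gaussDensity k s w • heatGrad μ τ₁ (x - w)‖
        ≤ ∫ w : Euc k, ‖gaussDensity k s w • heatGrad μ τ₁ (x - w)‖ :=
          norm_integral_le_integral_norm _
      _ = ∫ w, q w * r w := by
          apply integral_congr_ae
          filter_upwards with w
          exact (hqr w).symm
  have hCS := cs_integral q r hqnn hrnn Iq Iqr Iqr2
  have hI0 : ∫ w, q w = heatDensity μ (s + τ₁) x := (conv_heat hs hτ₁ x).symm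
  have hI2 : ∫ w, q w * r w ^ 2 = ∫ w : Euc k, gaussDensity k s w * scoreE μ τ₁ (x - w) :=
    integral_congr_ae (Filter.Eventually.of_forall hqr2)
  have hp2 : 0 < heatDensity μ (s + τ₁) x := heat_pos hst hR0 hR x
  rw [scoreE, div_le_iff₀ hp2]
  have hG2sq : ‖heatGrad μ (s + τ₁) x‖ ^ 2 ≤ (∫ w, q w * r w) ^ 2 :=
    pow_le_pow_left₀ (norm_nonneg _) hG2 2
  calc ‖heatGrad μ (s + τ₁) x‖ ^ 2 ≤ (∫ w, q w * r w) ^ 2 := hG2sq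
    _ ≤ (∫ w, q w) * ∫ w, q w * r w ^ 2 := hCS
    _ = (∫ w : Euc k, gaussDensity k s w * scoreE μ τ₁ (x - w))
          * heatDensity μ (s + τ₁) x := by rw [hI0, hI2]; ring

lemma integrable_weighted_heat {τ R : ℝ} (hτ : 0 < τ) (hR0 : 0 ≤ R)
    (hR : μ (Metric.closedBall (0 : Euc k) R)ᶜ = 0) :
    Integrable (fun x : Euc k => (‖x‖ + R) ^ 2 * heatDensity μ τ x) := by
  set ψ : Euc k → ℝ := fun z => (‖z‖ + 2 * R) ^ 2 * gaussDensity k τ z with hψ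
  have hψ_int : Integrable ψ := by
    have := gauss_mul_sq_integrable (k := k) hτ (2 * R) (by linarith)
    apply this.congr
    filter_upwards with z
    rw [hψ]
    ring_nf
  have hψ_meas : Measurable ψ :=
    (((continuous_norm.add continuous_const).pow 2).mul (gauss_continuous hτ)).measurable
  have hmeas : Continuous (fun x : Euc k => (‖x‖ + R) ^ 2 * heatDensity μ τ x) :=
    ((continuous_norm.add continuous_const).pow 2).mul (heat_continuous hτ)
  refine ⟨hmeas.aestronglyMeasurable, ?_⟩
  rw [hasFiniteIntegral_iff_ofReal (Filter.Eventually.of_forall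
    (fun x => mul_nonneg (sq_nonneg _) (heat_nonneg hτ x)))]
  have step1 : ∀ x : Euc k, ENNReal.ofReal ((‖x‖ + R) ^ 2 * heatDensity μ τ x)
      ≤ ∫⁻ y, ENNReal.ofReal (ψ (x - y)) ∂μ := by
    intro x
    have hint : Integrable (fun y => (‖x‖ + R) ^ 2 * gaussDensity k τ (x - y)) μ :=
      (integrable_gauss_shift hτ x).const_mul _
    have he : (‖x‖ + R) ^ 2 * heatDensity μ τ x
        = ∫ y, (‖x‖ + R) ^ 2 * gaussDensity k τ (x - y) ∂μ := by
      rw [integral_const_mul]; rfl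
    rw [he, ofReal_integral_eq_lintegral_ofReal hint (Filter.Eventually.of_forall
      (fun y => mul_nonneg (sq_nonneg _) (gauss_nonneg hτ _)))]
    apply lintegral_mono_ae
    filter_upwards [ae_mem_ball hR] with y hy
    rw [Metric.mem_closedBall, dist_zero_right] at hy
    apply ENNReal.ofReal_le_ofReal
    rw [hψ]
    apply mul_le_mul_of_nonneg_right _ (gauss_nonneg hτ _)
    have h1 : ‖x‖ + R ≤ ‖x - y‖ + 2 * R := by
      have := norm_sub_norm_le x y
      have h2 : ‖x‖ ≤ ‖x - y‖ + ‖y‖ := by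
        have := norm_sub_le (x - y) (-y)
        simpa [sub_neg_eq_add, sub_add_cancel] using norm_add_le (x - y) y
      linarith
    exact pow_le_pow_left₀ (by positivity) h1 2
  have hL : ∫⁻ z, ENNReal.ofReal (ψ z) < ⊤ := hψ_int.lintegral_lt_top
  calc ∫⁻ x, ENNReal.ofReal ((‖x‖ + R) ^ 2 * heatDensity μ τ x)
      ≤ ∫⁻ x, ∫⁻ y, ENNReal.ofReal (ψ (x - y)) ∂μ := lintegral_mono step1
    _ = ∫⁻ y, ∫⁻ x, ENNReal.ofReal (ψ (x - y)) ∂volume ∂μ := by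
        apply lintegral_lintegral_swap
        apply Measurable.aemeasurable
        apply Measurable.ennreal_ofReal
        exact hψ_meas.comp (measurable_fst.sub measurable_snd)
    _ = ∫⁻ _, ∫⁻ z, ENNReal.ofReal (ψ z) ∂volume ∂μ := by
        apply lintegral_congr_ae
        filter_upwards with y
        exact lintegral_sub_right_eq_self (fun z => ENNReal.ofReal (ψ z)) y
    _ = ∫⁻ z, ENNReal.ofReal (ψ z) := by
        rw [lintegral_const, measure_univ, mul_one]
    _ < ⊤ := hL

lemma scoreE_integrable {τ R : ℝ} (hτ : 0 < τ) (hR0 : 0 ≤ R)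
    (hR : μ (Metric.closedBall (0 : Euc k) R)ᶜ = 0) :
    Integrable (scoreE μ τ) := by
  apply Integrable.mono' ((integrable_weighted_heat hτ hR0 hR).const_mul ((τ⁻¹)^2))
  · exact (scoreE_measurable hτ).aestronglyMeasurable
  · filter_upwards with x
    rw [Real.norm_eq_abs, abs_of_nonneg (scoreE_nonneg hτ x)]
    calc scoreE μ τ x ≤ (τ⁻¹ * (‖x‖ + R)) ^ 2 * heatDensity μ τ x := scoreE_le hτ hR0 hR x
      _ = (τ⁻¹)^2 * ((‖x‖ + R) ^ 2 * heatDensity μ τ x) := by ring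

lemma fisher_eq' {τ R : ℝ} (hτ : 0 < τ) (hR0 : 0 ≤ R)
    (hR : μ (Metric.closedBall (0 : Euc k) R)ᶜ = 0) :
    FisherInfo μ τ = ∫ x, scoreE μ τ x := fisher_eq hτ hR0 hR

lemma fisher_le {s τ₁ R : ℝ} (hs : 0 < s) (hτ₁ : 0 < τ₁) (hR0 : 0 ≤ R)
    (hR : μ (Metric.closedBall (0 : Euc k) R)ᶜ = 0) :
    FisherInfo μ (s + τ₁) ≤ FisherInfo μ τ₁ := by
  have hst : 0 < s + τ₁ := by linarith
  rw [fisher_eq' hst hR0 hR, fisher_eq' hτ₁ hR0 hR]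
  set L : ℝ → ENNReal := fun τ => ∫⁻ x, ENNReal.ofReal (scoreE μ τ x) with hLdef
  have hrepr : ∀ τ, 0 < τ → ∫ x, scoreE μ τ x = (L τ).toReal := by
    intro τ hτ
    rw [integral_eq_lintegral_of_nonneg_ae (Filter.Eventually.of_forall (scoreE_nonneg hτ))
      (scoreE_measurable hτ).aestronglyMeasurable]
  have hL1 : L τ₁ ≠ ⊤ := (scoreE_integrable hτ₁ hR0 hR).lintegral_lt_top.ne
  have key : L (s + τ₁) ≤ L τ₁ := by
    have hmeas1 : Measurable fun p : Euc k × Euc k =>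
        ENNReal.ofReal (gaussDensity k s p.2 * scoreE μ τ₁ (p.1 - p.2)) := by
      apply Measurable.ennreal_ofReal
      exact ((gauss_continuous hs).measurable.comp measurable_snd).mul
        ((scoreE_measurable hτ₁).comp (measurable_fst.sub measurable_snd))
    calc L (s + τ₁)
        ≤ ∫⁻ x, ENNReal.ofReal (∫ w : Euc k, gaussDensity k s w * scoreE μ τ₁ (x - w)) := by
          apply lintegral_mono
          intro x
          exact ENNReal.ofReal_le_ofReal (scoreE_conv_le hs hτ₁ hR0 hR x)
      _ = ∫⁻ x, ∫⁻ w, ENNReal.ofReal (gaussDensity k s w * scoreE μ τ₁ (x - w)) ∂volume := by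
          apply lintegral_congr_ae
          filter_upwards with x
          exact ofReal_integral_eq_lintegral_ofReal (gauss_scoreE_integrable hs hτ₁ hR0 hR x)
            (Filter.Eventually.of_forall
              (fun w => mul_nonneg (gauss_nonneg hs w) (scoreE_nonneg hτ₁ _)))
      _ = ∫⁻ w, ∫⁻ x, ENNReal.ofReal (gaussDensity k s w * scoreE μ τ₁ (x - w)) ∂volume
            ∂volume := lintegral_lintegral_swap hmeas1.aemeasurable
      _ = ∫⁻ w, ENNReal.ofReal (gaussDensity k s w)
            * ∫⁻ x, ENNReal.ofReal (scoreE μ τ₁ (x - w)) ∂volume ∂volume := by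
          apply lintegral_congr_ae
          filter_upwards with w
          have hm : Measurable (fun x : Euc k => ENNReal.ofReal (scoreE μ τ₁ (x - w))) :=
            ((scoreE_measurable hτ₁).comp (measurable_id.sub measurable_const)).ennreal_ofReal
          rw [← lintegral_const_mul _ hm]
          apply lintegral_congr_ae
          filter_upwards with x
          rw [ENNReal.ofReal_mul (gauss_nonneg hs w)]
      _ = ∫⁻ w, ENNReal.ofReal (gaussDensity k s w) * L τ₁ ∂volume := by
          apply lintegral_congr_ae
          filter_upwards with w
          congr 1
          exact lintegral_sub_right_eq_self (fun z => ENNReal.ofReal (scoreE μ τ₁ z)) w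
      _ = (∫⁻ w, ENNReal.ofReal (gaussDensity k s w) ∂volume) * L τ₁ := by
          rw [lintegral_mul_const _ ((gauss_continuous hs).measurable.ennreal_ofReal)]
      _ = L τ₁ := by
          rw [← ofReal_integral_eq_lintegral_ofReal (gauss_integrable hs)
            (Filter.Eventually.of_forall (gauss_nonneg hs)), gauss_integral hs]
          simp
  rw [hrepr _ hst, hrepr _ hτ₁]
  exact ENNReal.toReal_mono hL1 key

end Conv


/-- the Fisher Information `τ ↦ I^{(k)}(μ_τ)` is nonincreasing on `(0, ∞)`. -/
theorem fisher_info_antitoneOn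
    (k : ℕ) (hk : 1 ≤ k) (μ : Measure (Euc k)) [IsProbabilityMeasure μ]
    (hcomp : ∃ R : ℝ, μ (Metric.closedBall (0 : Euc k) R)ᶜ = 0) :
    AntitoneOn (fun τ => FisherInfo μ τ) (Set.Ioi (0 : ℝ)) := by
  intro τ₁ h1 τ₂ h2 h12
  obtain ⟨R₀, hR₀⟩ := hcomp
  have hR0 : (0:ℝ) ≤ max R₀ 0 := le_max_right _ _
  have hR : μ (Metric.closedBall (0 : Euc k) (max R₀ 0))ᶜ = 0 :=
    measure_mono_null (Set.compl_subset_compl.2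
      (Metric.closedBall_subset_closedBall (le_max_left _ _))) hR₀
  simp only [Set.mem_Ioi] at h1 h2
  rcases eq_or_lt_of_le h12 with rfl | hlt
  · exact le_refl _
  · have hs : 0 < τ₂ - τ₁ := by linarith
    have h := fisher_le (μ := μ) (s := τ₂ - τ₁) hs h1 hR0 hR
    simpa [sub_add_cancel] using h
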